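/- Let f* be the least energy progress measure of an energy game arena Γ and let v ∈ V with f*(v) = n ∈ ℕ (so f*(v) ≠ ⊤). Then n is the minimum initial credit for v: some memoryless player-0 strategy is winning from v with credit n, and no player-0 memoryless strategy is winning from v with any credit c < n. -/

import Mathlib

open scoped Classical
noncomputable section

/-- An energy game arena: vertices `V`, edge relation `E`, integer weights `w`,
player-0 vertices `P0` (player 1 owns the rest), every vertex has a successor. -/
structure Arena (V : Type) where
  E : V → V → Prop
  w : V → V → ℤ
  P0 : V → Prop
  total : ∀ v, ∃ v', E v v'

variable {V : Type}

/-- `ρ` is a play (infinite path) starting at `v`. -/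
def IsPlay (A : Arena V) (v : V) (ρ : ℕ → V) : Prop :=
  ρ 0 = v ∧ ∀ i, A.E (ρ i) (ρ (i + 1))

/-- A memoryless strategy for player 0. -/
def Strategy0 (A : Arena V) (σ : V → V) : Prop :=
  ∀ v, A.P0 v → A.E v (σ v)

/-- A memoryless strategy for player 1. -/
def Strategy1 (A : Arena V) (σ : V → V) : Prop :=
  ∀ v, ¬ A.P0 v → A.E v (σ v)

/-- The play `ρ` is consistent with the player-0 strategy `σ`. -/
def Consistent0 (A : Arena V) (σ : V → V) (ρ : ℕ → V) : Prop :=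
  ∀ j, A.P0 (ρ j) → ρ (j + 1) = σ (ρ j)

/-- The play `ρ` is consistent with the player-1 strategy `σ`. -/
def Consistent1 (A : Arena V) (σ : V → V) (ρ : ℕ → V) : Prop :=
  ∀ j, ¬ A.P0 (ρ j) → ρ (j + 1) = σ (ρ j)

/-- Energy level of the prefix `ρ 0 … ρ j` with initial credit `c`. -/
def energy (A : Arena V) (c : ℕ) (ρ : ℕ → V) (j : ℕ) : ℤ :=
  (c : ℤ) + ∑ i ∈ Finset.range j, A.w (ρ i) (ρ (i + 1))

/-- The player-0 strategy `σ` is winning from `v` with initial credit `c`. -/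
def WinningFrom (A : Arena V) (σ : V → V) (v : V) (c : ℕ) : Prop :=
  ∀ ρ : ℕ → V, IsPlay A v ρ → Consistent0 A σ ρ → ∀ j, 0 ≤ energy A c ρ j

/-- Winning region of player 0. -/
def W0 (A : Arena V) : Set V :=
  {v | ∃ σ : V → V, Strategy0 A σ ∧ ∃ c : ℕ, WinningFrom A σ v c}

/-- `a ⊖ b = max (0, a - b)`, with `⊤ ⊖ b = ⊤`. -/
def osub (a : ℕ∞) (b : ℤ) : ℕ∞ :=
  a.map (fun n : ℕ => ((n : ℤ) - b).toNat)

/-- Energy progress measure. -/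
def IsEPM (A : Arena V) (f : V → ℕ∞) : Prop :=
  (∀ v, A.P0 v → ∃ v', A.E v v' ∧ osub (f v') (A.w v v') ≤ f v) ∧
  (∀ v, ¬ A.P0 v → ∀ v', A.E v v' → osub (f v') (A.w v v') ≤ f v)

/-- New value at `v` computed by the lifting operator. -/
def liftVal (A : Arena V) (f : V → ℕ∞) (v : V) : ℕ∞ :=
  if A.P0 v then sInf {x : ℕ∞ | ∃ v', A.E v v' ∧ x = osub (f v') (A.w v v')}
  else sSup {x : ℕ∞ | ∃ v', A.E v v' ∧ x = osub (f v') (A.w v v')}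

/-- The lifting operator `δ(·, v)`. -/
def liftOp (A : Arena V) (f : V → ℕ∞) (v : V) : V → ℕ∞ :=
  fun u => if u = v then liftVal A f v else f u

/-- `f` violates the EPM local condition at `v`. -/
def Violates (A : Arena V) (f : V → ℕ∞) (v : V) : Prop :=
  (A.P0 v ∧ ∀ v', A.E v v' → f v < osub (f v') (A.w v v')) ∨
  (¬ A.P0 v ∧ ∃ v', A.E v v' ∧ f v < osub (f v') (A.w v v'))

/-- `M_Γ = Σ_{v∈V} max({0} ∪ {−w(v,v') : (v,v') ∈ E})`. -/
def MGamma (A : Arena V) [Fintype V] : ℕ :=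
  ∑ v : V, (Finset.univ.filter (fun v' => A.E v v')).sup (fun v' => (-(A.w v v')).toNat)

lemma osub_coe' (m : ℕ) (b : ℤ) : osub (m : ℕ∞) b = (((m : ℤ) - b).toNat : ℕ∞) := rfl

lemma osub_top' (b : ℤ) : osub (⊤ : ℕ∞) b = ⊤ := rfl

lemma osub_mono' {a a' : ℕ∞} (b : ℤ) (h : a ≤ a') : osub a b ≤ osub a' b := by
  cases a' with
  | top => exact le_top
  | coe m' =>
    cases a with
    | top => simp at h
    | coe m =>
      rw [osub_coe', osub_coe', Nat.cast_le]
      exact Int.toNat_le_toNat (by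
        have : (m : ℤ) ≤ (m' : ℤ) := by exact_mod_cast (WithTop.coe_le_coe.mp h)
        omega)

lemma energy_succ (A : Arena V) (c : ℕ) (ρ : ℕ → V) (j : ℕ) :
    energy A c ρ (j + 1) = energy A c ρ j + A.w (ρ j) (ρ (j + 1)) := by
  simp [energy, Finset.sum_range_succ]; ring

/-- canonical successor consistent with σ -/
def nextOf (A : Arena V) (σ : V → V) (u : V) : V :=
  if A.P0 u then σ u else Classical.choose (A.total u)

lemma canonical_play (A : Arena V) (σ : V → V) (hσ : Strategy0 A σ) (u : V) :
    ∃ ρ : ℕ → V, IsPlay A u ρ ∧ Consistent0 A σ ρ := by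
  refine ⟨fun j => (nextOf A σ)^[j] u, ⟨rfl, ?_⟩, ?_⟩
  · intro i
    show A.E ((nextOf A σ)^[i] u) ((nextOf A σ)^[i+1] u)
    rw [Function.iterate_succ_apply']
    set x := (nextOf A σ)^[i] u
    by_cases h : A.P0 x
    · simpa [nextOf, h] using hσ x h
    · simpa [nextOf, h] using Classical.choose_spec (A.total x)
  · intro j h
    show (nextOf A σ)^[j+1] u = σ ((nextOf A σ)^[j] u)
    rw [Function.iterate_succ_apply']
    simp [nextOf, h]

lemma winning_mono (A : Arena V) (σ : V → V) (u : V) {c c' : ℕ} (hcc : c ≤ c')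
    (hw : WinningFrom A σ u c) : WinningFrom A σ u c' := by
  intro ρ hp hcons j
  have := hw ρ hp hcons j
  have hcc' : (c : ℤ) ≤ (c' : ℤ) := by exact_mod_cast hcc
  unfold energy at this ⊢
  linarith

lemma step_lemma (A : Arena V) (σ : V → V) (hσ : Strategy0 A σ) {u u' : V} {c : ℕ}
    (hw : WinningFrom A σ u c) (he : A.E u u') (hc : A.P0 u → u' = σ u) :
    0 ≤ (c : ℤ) + A.w u u' ∧ WinningFrom A σ u' ((c + A.w u u').toNat) := by
  have prepend : ∀ ρ' : ℕ → V, IsPlay A u' ρ' → Consistent0 A σ ρ' →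
      ∀ j, 0 ≤ (c : ℤ) + A.w u u' + ∑ i ∈ Finset.range j, A.w (ρ' i) (ρ' (i + 1)) := by
    intro ρ' hp' hcons' j
    set ρ : ℕ → V := fun k => match k with | 0 => u | k + 1 => ρ' k with hρ
    have hplay : IsPlay A u ρ := by
      refine ⟨rfl, fun i => ?_⟩
      cases i with
      | zero => simpa [ρ, hp'.1] using he
      | succ k => exact hp'.2 k
    have hcons : Consistent0 A σ ρ := by
      intro k hk
      cases k with
      | zero => simp only [ρ] at hk ⊢; rw [hp'.1]; exact hc hk
      | succ k => exact hcons' k hk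
    have := hw ρ hplay hcons (j + 1)
    unfold energy at this
    rw [Finset.sum_range_succ'] at this
    simp only [ρ, hp'.1] at this
    convert this using 1
    ring
  constructor
  · obtain ⟨ρ', hp', hcons'⟩ := canonical_play A σ hσ u'
    simpa using prepend ρ' hp' hcons' 0
  · intro ρ' hp' hcons' j
    have h0 : 0 ≤ (c : ℤ) + A.w u u' := by
      obtain ⟨ρ'', hp'', hcons''⟩ := canonical_play A σ hσ u'
      simpa using prepend ρ'' hp'' hcons'' 0
    have := prepend ρ' hp' hcons' j
    unfold energy
    rw [Int.toNat_of_nonneg h0]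
    linarith

/-- If the least EPM has finite value `n` at `v`, then `n` is the minimum initial credit
for `v`: some memoryless player-0 strategy is winning from `v` with credit `n`, and no
memoryless player-0 strategy is winning from `v` with any credit `c < n`. -/
theorem stmt10 {V : Type} [Fintype V] [Nonempty V] (A : Arena V)
    (fstar : V → ℕ∞) (hEPM : IsEPM A fstar)
    (hleast : ∀ f : V → ℕ∞, IsEPM A f → ∀ v, fstar v ≤ f v)
    (v : V) (n : ℕ) (hfv : fstar v = (n : ℕ∞)) :
    (∃ σ : V → V, Strategy0 A σ ∧ WinningFrom A σ v n) ∧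
    (∀ c : ℕ, c < n → ∀ σ : V → V, Strategy0 A σ → ¬ WinningFrom A σ v c) := by
  constructor
  · -- soundness: build a winning strategy from the EPM
    set σ : V → V := fun u =>
      if h : A.P0 u then Classical.choose (hEPM.1 u h) else Classical.choose (A.total u)
      with hσdef
    have hσ : Strategy0 A σ := by
      intro u hu
      simp only [hσdef, dif_pos hu]
      exact (Classical.choose_spec (hEPM.1 u hu)).1
    refine ⟨σ, hσ, ?_⟩
    intro ρ hplay hcons j
    -- invariant
    have inv : ∀ j, ∃ m : ℕ, fstar (ρ j) = (m : ℕ∞) ∧ (m : ℤ) ≤ energy A n ρ j := by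
      intro j
      induction j with
      | zero =>
        refine ⟨n, by rw [hplay.1]; exact hfv, ?_⟩
        simp [energy]
      | succ k ih =>
        obtain ⟨m, hm, hle⟩ := ih
        have hkey : osub (fstar (ρ (k + 1))) (A.w (ρ k) (ρ (k + 1))) ≤ fstar (ρ k) := by
          by_cases h : A.P0 (ρ k)
          · have hnext : ρ (k + 1) = σ (ρ k) := hcons k h
            have hspec := (Classical.choose_spec (hEPM.1 (ρ k) h)).2
            rw [hnext]
            simpa [hσdef, dif_pos h] using hspec
          · exact hEPM.2 (ρ k) h (ρ (k + 1)) (hplay.2 k)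
        rw [hm] at hkey
        cases hfk : fstar (ρ (k + 1)) with
        | top => rw [hfk] at hkey; simp [osub_top'] at hkey
        | coe m' =>
          rw [hfk, osub_coe', Nat.cast_le] at hkey
          refine ⟨m', rfl, ?_⟩
          rw [energy_succ]
          have h1 : (m' : ℤ) - A.w (ρ k) (ρ (k + 1)) ≤
              (((m' : ℤ) - A.w (ρ k) (ρ (k + 1))).toNat : ℤ) := Int.self_le_toNat _
          have h2 : ((((m' : ℤ) - A.w (ρ k) (ρ (k + 1))).toNat : ℕ) : ℤ) ≤ (m : ℤ) := by
            exact_mod_cast hkey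
          linarith
    obtain ⟨m, _, hle⟩ := inv j
    have : (0 : ℤ) ≤ (m : ℤ) := by positivity
    linarith
  · -- optimality: no smaller credit works
    intro c hc σ hσ hw
    set f : V → ℕ∞ := fun u =>
      if h : ∃ d : ℕ, WinningFrom A σ u d then ((Nat.find h : ℕ) : ℕ∞) else ⊤ with hfdef
    have hf_le : ∀ u d, WinningFrom A σ u d → f u ≤ (d : ℕ∞) := by
      intro u d hd
      have h : ∃ d : ℕ, WinningFrom A σ u d := ⟨d, hd⟩
      simp only [hfdef, dif_pos h, Nat.cast_le]
      exact Nat.find_le hd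
    have hf_win : ∀ u (m : ℕ), f u = (m : ℕ∞) → WinningFrom A σ u m := by
      intro u m hm
      by_cases h : ∃ d : ℕ, WinningFrom A σ u d
      · simp only [hfdef, dif_pos h, Nat.cast_inj] at hm
        rw [← hm]
        exact Nat.find_spec h
      · simp only [hfdef, dif_neg h] at hm
        exact absurd hm.symm (WithTop.coe_ne_top)
    have hstep : ∀ u u' (m : ℕ), A.E u u' → (A.P0 u → u' = σ u) → f u = (m : ℕ∞) →
        osub (f u') (A.w u u') ≤ f u := by
      intro u u' m he hcond hm
      obtain ⟨h0, hw'⟩ := step_lemma A σ hσ (hf_win u m hm) he hcond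
      have h1 : f u' ≤ ((((m : ℤ) + A.w u u').toNat : ℕ) : ℕ∞) := hf_le u' _ hw'
      calc osub (f u') (A.w u u') ≤ osub ((((m : ℤ) + A.w u u').toNat : ℕ) : ℕ∞) (A.w u u') :=
            osub_mono' _ h1
        _ = f u := by
            rw [osub_coe', hm]
            congr 1
            rw [Int.toNat_of_nonneg h0]
            omega
    have hEPMf : IsEPM A f := by
      constructor
      · intro u hu
        refine ⟨σ u, hσ u hu, ?_⟩
        cases hfu : f u with
        | top => exact le_top
        | coe m => rw [← hfu]; exact hstep u (σ u) m (hσ u hu) (fun _ => rfl) hfu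
      · intro u hu u' he
        cases hfu : f u with
        | top => exact le_top
        | coe m => rw [← hfu]; exact hstep u u' m he (fun h => absurd h hu) hfu
    have h1 : fstar v ≤ f v := hleast f hEPMf v
    have h2 : f v ≤ (c : ℕ∞) := hf_le v c hw
    rw [hfv] at h1
    have : (n : ℕ∞) ≤ (c : ℕ∞) := le_trans h1 h2
    have : n ≤ c := by exact_mod_cast this
    omega
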